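/- Let n, t be positive integers with t | n, q = n/t, r = 10^q − 1, and let s, a₁, ..., aₙ be n-digit decimal numbers with ∑_{i=1}^n a_i^{(j)} < 10 for every digit position j. For x an n-digit number and 1 ≤ j ≤ t, let x^{[j]} be the number formed by the j-th block of q consecutive decimal digits of x. Then there exists S ⊆ {1,...,n} with ∑_{i∈S} a_i = s if and only if there exists S ⊆ {1,...,n} with ∑_{i∈S} a_i^{[j]} = s^{[j]} for every j ∈ {1,...,t}. -/

import Mathlib

open Finset

/-- A sum of digits `c j < b` times powers of `b` is less than `b ^ n`. -/
lemma val_lt (b n : ℕ) (c : ℕ → ℕ) (hc : ∀ j, c j < b) :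
    ∑ j ∈ range n, c j * b ^ j < b ^ n := by
  induction n with
  | zero => simp
  | succ n ih =>
    rw [Finset.sum_range_succ, pow_succ]
    have h1 : c n * b ^ n ≤ (b - 1) * b ^ n :=
      Nat.mul_le_mul_right _ (Nat.le_sub_one_of_lt (hc n))
    have hb : 0 < b := (Nat.zero_le _).trans_lt (hc 0)
    have hb1 : 1 + (b - 1) = b := by omega
    have : b ^ n + (b - 1) * b ^ n = b ^ n * b := by
      calc b ^ n + (b - 1) * b ^ n = (1 + (b - 1)) * b ^ n := by ring
        _ = b ^ n * b := by rw [hb1]; ring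
    omega

/-- Base-`b` representation of `N < b ^ n`. -/
lemma val_rep (b n N : ℕ) (hb : 0 < b) (hN : N < b ^ n) :
    ∑ j ∈ range n, (N / b ^ j % b) * b ^ j = N := by
  induction n generalizing N with
  | zero =>
    simp only [pow_zero, Nat.lt_one_iff] at hN
    simp [hN]
  | succ n ih =>
    rw [Finset.sum_range_succ']
    have h2 : N / b < b ^ n := by
      rw [Nat.div_lt_iff_lt_mul hb, ← pow_succ]; exact hN
    have hrec := ih (N / b) h2
    have hstep : ∑ j ∈ range n, (N / b ^ (j + 1) % b) * b ^ (j + 1)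
        = (∑ j ∈ range n, (N / b / b ^ j % b) * b ^ j) * b := by
      rw [Finset.sum_mul]
      refine Finset.sum_congr rfl fun j _ => ?_
      rw [pow_succ', Nat.div_div_eq_div_mul]
      ring
    rw [hstep, hrec]
    simp only [pow_zero, Nat.div_one, mul_one]
    rw [Nat.mul_comm]
    exact Nat.div_add_mod N b

/-- Dividing a base-`b` value by `b ^ k` shifts the digits. -/
lemma val_div (b n k : ℕ) (c : ℕ → ℕ) (hc : ∀ j, c j < b) (hk : k ≤ n) :
    (∑ j ∈ range n, c j * b ^ j) / b ^ k
      = ∑ j ∈ range (n - k), c (k + j) * b ^ j := by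
  have hb : 0 < b := (Nat.zero_le _).trans_lt (hc 0)
  obtain ⟨m, rfl⟩ : ∃ m, n = k + m := ⟨n - k, by omega⟩
  rw [Nat.add_sub_cancel_left, Finset.sum_range_add]
  have h2 : ∑ j ∈ range m, c (k + j) * b ^ (k + j)
      = b ^ k * ∑ j ∈ range m, c (k + j) * b ^ j := by
    rw [Finset.mul_sum]
    refine Finset.sum_congr rfl fun j _ => ?_
    rw [pow_add]; ring
  rw [h2, Nat.add_mul_div_left _ _ (pow_pos hb k),
    Nat.div_eq_of_lt (val_lt b k c hc), zero_add]

/-- Taking a base-`b` value mod `b ^ k` truncates the digits. -/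
lemma val_mod (b n k : ℕ) (c : ℕ → ℕ) (hc : ∀ j, c j < b) (hk : k ≤ n) :
    (∑ j ∈ range n, c j * b ^ j) % b ^ k = ∑ j ∈ range k, c j * b ^ j := by
  obtain ⟨m, rfl⟩ : ∃ m, n = k + m := ⟨n - k, by omega⟩
  rw [Finset.sum_range_add]
  have h2 : ∑ j ∈ range m, c (k + j) * b ^ (k + j)
      = b ^ k * ∑ j ∈ range m, c (k + j) * b ^ j := by
    rw [Finset.mul_sum]
    refine Finset.sum_congr rfl fun j _ => ?_
    rw [pow_add]; ring
  rw [h2, Nat.add_mul_mod_self_left, Nat.mod_eq_of_lt (val_lt b k c hc)]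

/-- Block extraction in terms of digits. -/
lemma block_eq (b n q m N : ℕ) (hb : 0 < b) (hN : N < b ^ n) (h : m * q + q ≤ n) :
    N / b ^ (m * q) % b ^ q = ∑ j ∈ range q, (N / b ^ (m * q + j) % b) * b ^ j := by
  conv_lhs => rw [← val_rep b n N hb hN]
  rw [val_div b n (m * q) _ (fun j => Nat.mod_lt _ hb) (by omega),
      val_mod b (n - m * q) q _ (fun j => Nat.mod_lt _ hb) (by omega)]

/-- for carry-free numbers, a subset sums to `s` iff it sums to
`s` block-by-block in blocks of `q` decimal digits. -/
theorem carryless_subset_sum_blocks (n t q : ℕ) (ht : 0 < t) (hq : 0 < q)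
    (hn : n = t * q) (s : ℕ) (a : Fin n → ℕ)
    (hs : s < 10 ^ n) (ha : ∀ i, a i < 10 ^ n)
    (hcf : ∀ j, ∑ i : Fin n, a i / 10 ^ j % 10 < 10) :
    (∃ S : Finset (Fin n), ∑ i ∈ S, a i = s) ↔
    (∃ S : Finset (Fin n), ∀ j < t,
      ∑ i ∈ S, (a i / 10 ^ (j * q) % 10 ^ q) = s / 10 ^ (j * q) % 10 ^ q) := by
  have hb : (0 : ℕ) < 10 := by norm_num
  have hd : ∀ (S : Finset (Fin n)) (j : ℕ), ∑ i ∈ S, a i / 10 ^ j % 10 < 10 :=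
    fun S j => lt_of_le_of_lt
      (Finset.sum_le_sum_of_subset (Finset.subset_univ S)) (hcf j)
  have hsum : ∀ S : Finset (Fin n),
      ∑ i ∈ S, a i = ∑ j ∈ range n, (∑ i ∈ S, a i / 10 ^ j % 10) * 10 ^ j := by
    intro S
    calc ∑ i ∈ S, a i
        = ∑ i ∈ S, ∑ j ∈ range n, (a i / 10 ^ j % 10) * 10 ^ j :=
          Finset.sum_congr rfl fun i _ => (val_rep 10 n (a i) hb (ha i)).symm
      _ = ∑ j ∈ range n, (∑ i ∈ S, a i / 10 ^ j % 10) * 10 ^ j := by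
          rw [Finset.sum_comm]; simp [Finset.sum_mul]
  have hlt : ∀ S : Finset (Fin n), ∑ i ∈ S, a i < 10 ^ n := by
    intro S; rw [hsum S]; exact val_lt 10 n _ (hd S)
  have key : ∀ (S : Finset (Fin n)) (m : ℕ), m < t →
      (∑ i ∈ S, a i) / 10 ^ (m * q) % 10 ^ q
        = ∑ i ∈ S, (a i / 10 ^ (m * q) % 10 ^ q) := by
    intro S m hm
    have hmn : m * q + q ≤ n := by
      rw [hn]
      calc m * q + q = (m + 1) * q := by ring
        _ ≤ t * q := Nat.mul_le_mul_right _ (by omega)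
    rw [hsum S, val_div 10 n (m * q) _ (hd S) (by omega),
        val_mod 10 (n - m * q) q _ (fun j => hd S _) (by omega)]
    calc ∑ j ∈ range q, (∑ i ∈ S, a i / 10 ^ (m * q + j) % 10) * 10 ^ j
        = ∑ i ∈ S, ∑ j ∈ range q, (a i / 10 ^ (m * q + j) % 10) * 10 ^ j := by
          rw [Finset.sum_comm]; simp [Finset.sum_mul]
      _ = ∑ i ∈ S, a i / 10 ^ (m * q) % 10 ^ q :=
          Finset.sum_congr rfl fun i _ => (block_eq 10 n q m (a i) hb (ha i) hmn).symm
  have huniq : ∀ N M : ℕ, N < 10 ^ n → M < 10 ^ n →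
      (∀ m < t, N / 10 ^ (m * q) % 10 ^ q = M / 10 ^ (m * q) % 10 ^ q) → N = M := by
    intro N M hN hM h
    have hq10 : (0 : ℕ) < 10 ^ q := pow_pos hb q
    have hN' : N < (10 ^ q) ^ t := by
      rw [← pow_mul, Nat.mul_comm, ← hn]; exact hN
    have hM' : M < (10 ^ q) ^ t := by
      rw [← pow_mul, Nat.mul_comm, ← hn]; exact hM
    rw [← val_rep (10 ^ q) t N hq10 hN', ← val_rep (10 ^ q) t M hq10 hM']
    refine Finset.sum_congr rfl fun m hm => ?_
    have hblk := h m (Finset.mem_range.mp hm)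
    rw [← pow_mul, Nat.mul_comm q m] at *
    rw [hblk]
  constructor
  · rintro ⟨S, hS⟩
    exact ⟨S, fun m hm => by rw [← (key S m hm), hS]⟩
  · rintro ⟨S, hS⟩
    refine ⟨S, huniq _ _ (hlt S) hs fun m hm => ?_⟩
    rw [key S m hm, hS m hm]
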